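/- For the n×n matrix D̃(ω) obtained from D(ω) by changing only the (n,n)-entry from ω/(ω+α) to -ω/(ω+α), one has det D̃(ω) = ((n-2)ω + α)/(ω + α). -/

import Mathlib

open Matrix

lemma stmt_6_aux (m : ℕ) (w : ℂ) :
    Matrix.det (Matrix.of fun i j : Fin (m + 2) =>
      if i.val = m + 1 then
        (if j.val = 0 then (1 : ℂ)
         else if j.val = m + 1 then -w
         else w)
      else if j.val = i.val then 1
      else if j.val = i.val + 1 then -1
      else 0) = 1 + ((m : ℂ) - 1) * w := by
  set M : Matrix (Fin (m + 2)) (Fin (m + 2)) ℂ := Matrix.of fun i j : Fin (m + 2) =>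
      if i.val = m + 1 then
        (if j.val = 0 then (1 : ℂ)
         else if j.val = m + 1 then -w
         else w)
      else if j.val = i.val then 1
      else if j.val = i.val + 1 then -1
      else 0 with hM
  set T : Matrix (Fin (m + 2)) (Fin (m + 2)) ℂ :=
    Matrix.of fun k j : Fin (m + 2) => if j ≤ k then (1 : ℂ) else 0 with hT
  have hTtri : T.BlockTriangular OrderDual.toDual := by
    intro i j hij
    have : i < j := hij
    simp [hT, not_le.mpr this]
  have hTdet : T.det = 1 := by
    rw [Matrix.det_of_lowerTriangular T hTtri]
    simp [hT]
  have hMT : ∀ i j : Fin (m + 2), i.val ≠ m + 1 →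
      (M * T) i j = T i j - T (i + 1) j := by
    intro i j hi
    have hlt : i.val < m + 1 := by omega
    have hne : i ≠ Fin.last (m + 1) := by
      intro h; apply hi; rw [h]; rfl
    have hval : ((i + 1 : Fin (m + 2))).val = i.val + 1 := by
      rw [Fin.val_add_one, if_neg hne]
    rw [Matrix.mul_apply]
    have hterm : ∀ k : Fin (m + 2), M i k * T k j =
        (if k = i then T k j else 0) - (if k = i + 1 then T k j else 0) := by
      intro k
      by_cases h1 : k = i
      · subst h1
        have h2 : k ≠ k + 1 := by
          intro h; have := congrArg Fin.val h; rw [hval] at this; omega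
        simp [hM, hi, h2]
      · by_cases h2 : k = i + 1
        · subst h2
          have hkv : ((i + 1 : Fin (m + 2))).val ≠ i.val := by rw [hval]; omega
          simp [hM, hi, hkv, hval, h1]
        · have hkv1 : k.val ≠ i.val := fun h => h1 (Fin.ext h)
          have hkv2 : k.val ≠ i.val + 1 := by
            intro h; apply h2; apply Fin.ext; rw [hval]; exact h
          simp [hM, hi, hkv1, hkv2, h1, h2]
    rw [Finset.sum_congr rfl fun k _ => hterm k, Finset.sum_sub_distrib]
    simp
  set N : Matrix (Fin (m + 2)) (Fin (m + 2)) ℂ :=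
    (M * T).submatrix id (finRotate (m + 2)) with hN
  have hNtri : N.BlockTriangular OrderDual.toDual := by
    intro i j hij
    have hij' : i < j := hij
    have hiv : i.val < j.val := hij'
    have hjv : j.val ≤ m + 1 := by omega
    have hi : i.val ≠ m + 1 := by omega
    have hival : ((i + 1 : Fin (m + 2))).val = i.val + 1 := by
      rw [Fin.val_add_one, if_neg (fun h => by rw [h] at hi; exact hi rfl)]
    have : N i j = T i (j + 1) - T (i + 1) (j + 1) := by
      rw [hN]; simp only [Matrix.submatrix_apply, id_eq, finRotate_succ_apply]
      exact hMT i (j + 1) hi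
    rw [this]
    by_cases hj : j = Fin.last (m + 1)
    · have : (j + 1 : Fin (m + 2)) = 0 := by rw [hj]; simp
      rw [this]
      simp [hT, Fin.zero_le]
    · have hjval : ((j + 1 : Fin (m + 2))).val = j.val + 1 := by
        rw [Fin.val_add_one, if_neg hj]
      have h1 : ¬ (j + 1 ≤ i) := by
        rw [not_le, Fin.lt_iff_val_lt_val, hjval]; omega
      have h2 : ¬ (j + 1 ≤ i + 1) := by
        rw [not_le, Fin.lt_iff_val_lt_val, hjval, hival]; omega
      simp [hT, h1, h2]
  have hS : (M * T) (Fin.last (m + 1)) 0 = 1 + ((m : ℂ) - 1) * w := by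
    rw [Matrix.mul_apply]
    have hterm : ∀ k : Fin (m + 2), M (Fin.last (m + 1)) k * T k 0 =
        (if k.val = 0 then (1 : ℂ) else if k.val = m + 1 then -w else w) := by
      intro k
      have : T k 0 = 1 := by simp [hT, Fin.zero_le]
      rw [this, mul_one, hM]
      simp
    rw [Finset.sum_congr rfl fun k _ => hterm k]
    rw [Fin.sum_univ_eq_sum_range (fun k => if k = 0 then (1 : ℂ) else if k = m + 1 then -w else w)]
    rw [Finset.sum_range_succ']
    have : ∀ k ∈ Finset.range (m + 1),
        (if k + 1 = 0 then (1 : ℂ) else if k + 1 = m + 1 then -w else w)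
        = if k = m then -w else w := by
      intro k _
      simp only [Nat.succ_ne_zero, if_false, Nat.add_right_cancel_iff]
    rw [Finset.sum_congr rfl this, Finset.sum_range_succ]
    have : ∀ k ∈ Finset.range m, (if k = m then -w else w) = w := by
      intro k hk
      rw [if_neg (Nat.ne_of_lt (Finset.mem_range.mp hk))]
    rw [Finset.sum_congr rfl this, Finset.sum_const, if_pos rfl]
    simp only [if_pos rfl, smul_eq_mul, Finset.card_range]
    push_cast
    ring
  have hNdet : N.det = (-1 : ℂ) ^ (m + 1) * (1 + ((m : ℂ) - 1) * w) := by
    rw [Matrix.det_of_lowerTriangular N hNtri]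
    rw [Fin.prod_univ_castSucc]
    have hdiag : ∀ i : Fin (m + 1), N i.castSucc i.castSucc = -1 := by
      intro i
      have hi : (i.castSucc : Fin (m + 2)).val ≠ m + 1 := by
        have := i.isLt; simp [Fin.castSucc]; omega
      have hival : ((i.castSucc + 1 : Fin (m + 2))).val = i.val + 1 := by
        rw [Fin.val_add_one, if_neg (fun h => by rw [h] at hi; exact hi rfl)]
        simp
      have hNi : N i.castSucc i.castSucc
          = T i.castSucc (i.castSucc + 1) - T (i.castSucc + 1) (i.castSucc + 1) := by
        rw [hN]; simp only [Matrix.submatrix_apply, id_eq, finRotate_succ_apply]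
        exact hMT i.castSucc (i.castSucc + 1) hi
      rw [hNi]
      have h1 : ¬ ((i.castSucc + 1 : Fin (m + 2)) ≤ i.castSucc) := by
        rw [not_le, Fin.lt_iff_val_lt_val, hival]
        simp
      simp [hT, h1]
    rw [Finset.prod_congr rfl fun i _ => hdiag i, Finset.prod_const, Finset.card_univ,
      Fintype.card_fin]
    have hlast : N (Fin.last (m + 1)) (Fin.last (m + 1)) = 1 + ((m : ℂ) - 1) * w := by
      rw [hN]
      simp only [Matrix.submatrix_apply, id_eq, finRotate_succ_apply]
      have : (Fin.last (m + 1) + 1 : Fin (m + 2)) = 0 := by simp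
      rw [this]
      exact hS
    rw [hlast]
  have hNdet' : N.det = (-1 : ℂ) ^ (m + 1) * M.det := by
    rw [hN, Matrix.det_permute', sign_finRotate, Matrix.det_mul, hTdet, mul_one]
    norm_num
  have hpow : ((-1 : ℂ) ^ (m + 1)) ≠ 0 := by
    apply pow_ne_zero; norm_num
  have := hNdet'.symm.trans hNdet
  exact mul_left_cancel₀ hpow this

theorem stmt_6 (n : ℕ) (hn : 2 ≤ n) (ω : ℂ) (α : ℝ) (hωα : ω + (α : ℂ) ≠ 0) :
    Matrix.det (Matrix.of fun i j : Fin n =>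
      if i.val = n - 1 then
        (if j.val = 0 then 1
         else if j.val = n - 1 then -(ω / (ω + (α : ℂ)))
         else ω / (ω + (α : ℂ)))
      else if j.val = i.val then 1
      else if j.val = i.val + 1 then -1
      else 0) = (((n : ℂ) - 2) * ω + (α : ℂ)) / (ω + (α : ℂ)) := by
  obtain ⟨m, rfl⟩ : ∃ m, n = m + 2 := ⟨n - 2, by omega⟩
  have h1 : m + 2 - 1 = m + 1 := rfl
  rw [show (Matrix.of fun i j : Fin (m + 2) =>
      if i.val = m + 2 - 1 then
        (if j.val = 0 then 1
         else if j.val = m + 2 - 1 then -(ω / (ω + (α : ℂ)))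
         else ω / (ω + (α : ℂ)))
      else if j.val = i.val then 1
      else if j.val = i.val + 1 then (-1 : ℂ)
      else 0) = (Matrix.of fun i j : Fin (m + 2) =>
      if i.val = m + 1 then
        (if j.val = 0 then (1 : ℂ)
         else if j.val = m + 1 then -(ω / (ω + (α : ℂ)))
         else ω / (ω + (α : ℂ)))
      else if j.val = i.val then 1
      else if j.val = i.val + 1 then -1
      else 0) from by rw [h1]]
  rw [stmt_6_aux m (ω / (ω + (α : ℂ)))]
  field_simp
  push_cast
  ring
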